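/- Let G be a finite group and V a finite-dimensional representation of G over a field k. If A ⊆ k[V]^G is a graded geometric separating algebra, then the ring extension A ⊆ k[V]^G is integral and A is a finitely generated k-algebra. -/

import Mathlib

open MvPolynomial

section Common

variable {k : Type*} [Field k] {G : Type*} [Group G]
variable {ι : Type*} [Fintype ι] [DecidableEq ι]

/-- The `k`-algebra endomorphism of `k[V] = k[Xᵢ : i ∈ ι]` induced by `σ ∈ G` acting on
`V = ι → k` via the representation `ρ`:  `(σ • f)(v) = f (σ⁻¹ • v)`. -/
noncomputable def polyAct (ρ : Representation k G (ι → k)) (σ : G) :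
    MvPolynomial ι k →ₐ[k] MvPolynomial ι k :=
  aeval fun i => ∑ j, C (ρ σ⁻¹ (Pi.single j (1 : k)) i) * X j

/-- The ring of invariants `k[V]^G`, as a subalgebra of `k[V]`. -/
noncomputable def invariantRing (ρ : Representation k G (ι → k)) :
    Subalgebra k (MvPolynomial ι k) :=
  ⨅ σ : G, AlgHom.equalizer (polyAct ρ σ) (AlgHom.id k (MvPolynomial ι k))

/-- A subalgebra of `k[V]` is graded if it contains all homogeneous components
of its elements. -/
def IsGradedSubalgebra (A : Subalgebra k (MvPolynomial ι k)) : Prop :=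
  ∀ f ∈ A, ∀ d : ℕ, homogeneousComponent d f ∈ A

/-- A geometric separating algebra (testing separation on points with coordinates
in the extension field `K`): a subalgebra of the invariant ring which separates every
pair of `K`-points that the full invariant ring separates. -/
def IsGeomSeparatingAlgebraAt (K : Type*) [CommSemiring K] [Algebra k K]
    (ρ : Representation k G (ι → k)) (A : Subalgebra k (MvPolynomial ι k)) : Prop :=
  A ≤ invariantRing ρ ∧
    ∀ u v : ι → K,
      (∀ f ∈ A, aeval u f = aeval v f) →
        ∀ f ∈ invariantRing ρ, aeval u f = aeval v f

/-- A geometric separating algebra: separation is tested on points over an algebraic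
closure of `k`. -/
def IsGeomSeparatingAlgebra (ρ : Representation k G (ι → k))
    (A : Subalgebra k (MvPolynomial ι k)) : Prop :=
  IsGeomSeparatingAlgebraAt (AlgebraicClosure k) ρ A

/-- `rs` is a regular sequence on the commutative ring `R`: each entry is a
nonzerodivisor modulo the ideal generated by the previous ones, and the entries
generate a proper ideal. -/
def IsRegSeq (R : Type*) [CommRing R] (rs : List R) : Prop :=
  (∀ (i : ℕ) (h : i < rs.length) (y : R),
      rs.get ⟨i, h⟩ * y ∈ Ideal.span {x | x ∈ rs.take i} →
        y ∈ Ideal.span {x | x ∈ rs.take i}) ∧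
    Ideal.span {x | x ∈ rs} ≠ ⊤

/-- The depth of (the ideal generated by) a subset `S` of a commutative ring `R`:
the supremum of the lengths of regular sequences consisting of elements of `S`. -/
noncomputable def depthIn (R : Type*) [CommRing R] (S : Set R) : ℕ∞ :=
  ⨆ rs ∈ {rs : List R | (∀ x ∈ rs, x ∈ S) ∧ IsRegSeq R rs}, (rs.length : ℕ∞)

/-- The maximal homogeneous ideal `A₊` of a graded subalgebra of `k[V]`,
as a subset of `A` (elements with vanishing constant term). -/
def augSet (A : Subalgebra k (MvPolynomial ι k)) : Set A :=
  {a | constantCoeff (a : MvPolynomial ι k) = 0}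

/-- The depth of a graded subalgebra `A` of `k[V]`: `depth_A(A₊)`. -/
noncomputable def gDepth (A : Subalgebra k (MvPolynomial ι k)) : ℕ∞ :=
  depthIn A (augSet A)

/-- A graded subalgebra of `k[V]` is Cohen-Macaulay if its depth equals its
Krull dimension. -/
def IsCohenMacaulaySubalgebra (A : Subalgebra k (MvPolynomial ι k)) : Prop :=
  (gDepth A : WithBot ℕ∞) = ringKrullDim A

/-- The Cohen-Macaulay defect `dim A - depth A` of `A` is at least `c`. -/
def cmdefAtLeast (A : Subalgebra k (MvPolynomial ι k)) (c : ℕ) : Prop :=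
  (gDepth A : WithBot ℕ∞) + (c : ℕ∞) ≤ ringKrullDim A

end Common

section Aux

open MvPolynomial

variable {k : Type*} [Field k] {G : Type*} [Group G]
variable {ι : Type*} [Fintype ι] [DecidableEq ι]

lemma polyAct_X (ρ : Representation k G (ι → k)) (σ : G) (i : ι) :
    polyAct ρ σ (X i) = ∑ j, C (ρ σ⁻¹ (Pi.single j (1 : k)) i) * X j :=
  aeval_X _ i

lemma polyAct_C (ρ : Representation k G (ι → k)) (σ : G) (a : k) :
    polyAct ρ σ (C a) = C a := by
  rw [polyAct, aeval_C, algebraMap_eq]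

lemma polyAct_one (ρ : Representation k G (ι → k)) (f : MvPolynomial ι k) :
    polyAct ρ (1 : G) f = f := by
  suffices h : polyAct ρ (1 : G) = AlgHom.id k (MvPolynomial ι k) by
    rw [h, AlgHom.id_apply]
  apply algHom_ext
  intro i
  rw [polyAct_X, AlgHom.id_apply, inv_one, map_one]
  rw [Finset.sum_eq_single i]
  · simp
  · intro j _ hj
    rw [Module.End.one_apply, Pi.single_apply, if_neg (Ne.symm hj), map_zero, zero_mul]
  · intro h; exact absurd (Finset.mem_univ i) h

lemma repr_sum (ρ : Representation k G (ι → k)) (σ' : G) (v : ι → k) (i : ι) :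
    ρ σ' v i = ∑ j, v j * ρ σ' (Pi.single j (1 : k)) i := by
  have hv : v = ∑ j, v j • (Pi.single j (1 : k) : ι → k) := by
    conv_lhs => rw [pi_eq_sum_univ v]
    refine Finset.sum_congr rfl fun j _ => ?_
    congr 1
    funext l
    rw [Pi.single_apply]
    exact if_congr eq_comm rfl rfl
  conv_lhs => rw [hv, map_sum]
  rw [Finset.sum_apply]
  exact Finset.sum_congr rfl fun j _ => by rw [map_smul, Pi.smul_apply, smul_eq_mul]

lemma polyAct_mul (ρ : Representation k G (ι → k)) (τ σ : G) :
    (polyAct ρ τ).comp (polyAct ρ σ) = polyAct ρ (τ * σ) := by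
  apply algHom_ext
  intro i
  rw [AlgHom.comp_apply, polyAct_X, map_sum, polyAct_X]
  have hswap : ∀ j : ι, polyAct ρ τ (C (ρ σ⁻¹ (Pi.single j (1 : k)) i) * X j)
      = ∑ l, C (ρ σ⁻¹ (Pi.single j (1 : k)) i * ρ τ⁻¹ (Pi.single l (1 : k)) j) * X l := by
    intro j
    rw [map_mul, polyAct_C, polyAct_X, Finset.mul_sum]
    refine Finset.sum_congr rfl fun l _ => ?_
    rw [← mul_assoc, ← C_mul]
  rw [Finset.sum_congr rfl fun j _ => hswap j, Finset.sum_comm]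
  refine Finset.sum_congr rfl fun l _ => ?_
  rw [← Finset.sum_mul, ← map_sum]
  congr 2
  have h1 : ρ (τ * σ)⁻¹ (Pi.single l (1 : k)) = ρ σ⁻¹ (ρ τ⁻¹ (Pi.single l (1 : k))) := by
    rw [mul_inv_rev, map_mul, Module.End.mul_apply]
  rw [h1, repr_sum ρ σ⁻¹ (ρ τ⁻¹ (Pi.single l (1 : k))) i]
  exact Finset.sum_congr rfl fun j _ => mul_comm _ _

lemma mem_invariantRing_iff {ρ : Representation k G (ι → k)} {f : MvPolynomial ι k} :
    f ∈ invariantRing ρ ↔ ∀ σ : G, polyAct ρ σ f = f := by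
  rw [invariantRing, Algebra.mem_iInf]
  exact forall_congr' fun σ => AlgHom.mem_equalizer _ _ _

lemma aeval_invariant_eq_constant {K : Type*} [CommRing K] [Algebra k K]
    (ρ : Representation k G (ι → k)) (A : Subalgebra k (MvPolynomial ι k))
    (hsep : IsGeomSeparatingAlgebraAt K ρ A)
    (u : ι → K) (hu : ∀ g ∈ A, constantCoeff g = 0 → aeval u g = 0)
    {f : MvPolynomial ι k} (hf : f ∈ invariantRing ρ) :
    aeval u f = algebraMap k K (constantCoeff f) := by
  have hagree : ∀ g ∈ A, aeval u g = aeval (0 : ι → K) g := by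
    intro g hg
    have h1 : g - C (constantCoeff g) ∈ A :=
      A.sub_mem hg (by rw [← algebraMap_eq]; exact A.algebraMap_mem _)
    have h2 : constantCoeff (g - C (constantCoeff g)) = 0 := by
      rw [map_sub, constantCoeff_C, sub_self]
    have h3 := hu _ h1 h2
    rw [map_sub, aeval_C, sub_eq_zero] at h3
    rw [aeval_zero, h3]
  have h4 := hsep.2 u 0 hagree f hf
  rw [h4, aeval_zero]

lemma nullcone_trivial [Finite G] {K : Type*} [Field K] [Algebra k K]
    (ρ : Representation k G (ι → k)) (A : Subalgebra k (MvPolynomial ι k))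
    (hsep : IsGeomSeparatingAlgebraAt K ρ A)
    (u : ι → K) (hu : ∀ g ∈ A, constantCoeff g = 0 → aeval u g = 0) : u = 0 := by
  classical
  cases nonempty_fintype G
  funext i
  set Q : Polynomial (MvPolynomial ι k) :=
    ∏ σ : G, (Polynomial.X - Polynomial.C (polyAct ρ σ (X i))) with hQ
  have hmono : Q.Monic :=
    Polynomial.monic_prod_of_monic _ _ fun σ _ => Polynomial.monic_X_sub_C _
  set n : ℕ := Fintype.card G with hn
  have hdeg : Q.natDegree = n := by
    rw [hQ, Polynomial.natDegree_prod_of_monic _ _ fun σ _ => Polynomial.monic_X_sub_C _]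
    simp [hn]
  have hinv : ∀ j, Q.coeff j ∈ invariantRing ρ := by
    intro j
    rw [mem_invariantRing_iff]
    intro τ
    have hmap : Q.map ((polyAct ρ τ : MvPolynomial ι k →ₐ[k] MvPolynomial ι k) :
        MvPolynomial ι k →+* MvPolynomial ι k) = Q := by
      rw [hQ, Polynomial.map_prod]
      have heach : ∀ σ : G, (Polynomial.X - Polynomial.C (polyAct ρ σ (X i))).map
          ((polyAct ρ τ : MvPolynomial ι k →ₐ[k] MvPolynomial ι k) :
            MvPolynomial ι k →+* MvPolynomial ι k)
          = Polynomial.X - Polynomial.C (polyAct ρ (τ * σ) (X i)) := by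
        intro σ
        rw [Polynomial.map_sub, Polynomial.map_X, Polynomial.map_C]
        refine congrArg (fun x : MvPolynomial ι k => (Polynomial.X - Polynomial.C x : Polynomial (MvPolynomial ι k))) ?_
        show (polyAct ρ τ) ((polyAct ρ σ) (X i)) = _
        rw [← AlgHom.comp_apply, polyAct_mul]
      rw [Finset.prod_congr rfl fun σ _ => heach σ]
      exact Fintype.prod_equiv (Equiv.mulLeft τ) _ _ fun σ => rfl
    have hcoe := congrArg (fun P : Polynomial (MvPolynomial ι k) => P.coeff j) hmap
    simpa [Polynomial.coeff_map] using hcoe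
  have hcc : ∀ σ : G, constantCoeff (polyAct ρ σ (X i)) = 0 := by
    intro σ
    rw [polyAct_X, map_sum]
    refine Finset.sum_eq_zero fun j _ => ?_
    rw [map_mul, constantCoeff_X, mul_zero]
  have hccQ : ∀ j, j < n → constantCoeff (Q.coeff j) = 0 := by
    intro j hj
    have hmap : Q.map (constantCoeff : MvPolynomial ι k →+* k) = Polynomial.X ^ n := by
      rw [hQ, Polynomial.map_prod]
      rw [Finset.prod_congr rfl fun σ _ => by
        rw [Polynomial.map_sub, Polynomial.map_X, Polynomial.map_C, hcc σ, Polynomial.C_0,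
          sub_zero]]
      rw [Finset.prod_const, Finset.card_univ]
    have hcoe := congrArg (fun P : Polynomial k => P.coeff j) hmap
    simp only [Polynomial.coeff_map] at hcoe
    rw [hcoe, Polynomial.coeff_X_pow, if_neg (Nat.ne_of_lt hj)]
  have heval : Q.eval (X i) = 0 := by
    rw [hQ, Polynomial.eval_prod]
    refine Finset.prod_eq_zero (Finset.mem_univ (1 : G)) ?_
    rw [Polynomial.eval_sub, Polynomial.eval_X, Polynomial.eval_C, polyAct_one, sub_self]
  have h0 : (aeval u) (Q.eval (X i)) = 0 := by rw [heval, map_zero]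
  rw [Polynomial.eval_eq_sum_range, hdeg, map_sum] at h0
  have hterm : ∀ j ∈ Finset.range (n + 1),
      (aeval u) (Q.coeff j * X i ^ j) = if j = n then u i ^ n else 0 := by
    intro j hj
    rw [map_mul, map_pow, aeval_X]
    by_cases hjn : j = n
    · have hone : Q.coeff n = 1 := by
        have h := hmono.coeff_natDegree
        rwa [hdeg] at h
      rw [hjn, hone, map_one, one_mul, if_pos rfl]
    · have hlt : j < n := lt_of_le_of_ne (Nat.lt_succ_iff.mp (Finset.mem_range.mp hj)) hjn
      rw [aeval_invariant_eq_constant ρ A hsep u hu (hinv j), hccQ j hlt, map_zero, zero_mul,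
        if_neg hjn]
  rw [Finset.sum_congr rfl hterm, Finset.sum_ite_eq' (Finset.range (n + 1)) n] at h0
  rw [if_pos (Finset.self_mem_range_succ n)] at h0
  have hn0 : n ≠ 0 := Fintype.card_ne_zero
  exact pow_eq_zero_iff hn0 |>.mp h0

noncomputable def coeffRetract {K : Type*} [Field K] [Algebra k K] (L : K →ₗ[k] k) :
    MvPolynomial ι K →ₗ[k] MvPolynomial ι k :=
  (AddMonoidAlgebra.coeffLinearEquiv k).symm.toLinearMap ∘ₗ Finsupp.mapRange.linearMap L ∘ₗ
    (AddMonoidAlgebra.coeffLinearEquiv k).toLinearMap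

lemma coeff_coeffRetract {K : Type*} [Field K] [Algebra k K] (L : K →ₗ[k] k)
    (q : MvPolynomial ι K) (m : ι →₀ ℕ) :
    coeff m (coeffRetract L q) = L (coeff m q) := rfl

lemma retract_mem_span {K : Type*} [Field K] [Algebra k K]
    (T : Set (MvPolynomial ι k)) (p : MvPolynomial ι k)
    (hp : MvPolynomial.map (algebraMap k K) p ∈
      Ideal.span (MvPolynomial.map (algebraMap k K) '' T)) :
    p ∈ Ideal.span T := by
  classical
  obtain ⟨L, hL⟩ := (Algebra.linearMap k K).exists_leftInverse_of_injective
    (LinearMap.ker_eq_bot.mpr (algebraMap k K).injective)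
  have hLapp : ∀ a : k, L (algebraMap k K a) = a := fun a => LinearMap.congr_fun hL a
  have hΦmul : ∀ (g : MvPolynomial ι k) (q : MvPolynomial ι K),
      coeffRetract L (MvPolynomial.map (algebraMap k K) g * q) = g * coeffRetract L q := by
    intro g q
    apply MvPolynomial.ext
    intro m
    rw [coeff_coeffRetract, coeff_mul, coeff_mul, map_sum]
    refine Finset.sum_congr rfl fun x _ => ?_
    rw [coeff_map, coeff_coeffRetract, ← Algebra.smul_def, map_smul, smul_eq_mul]
  have hΦid : coeffRetract L (MvPolynomial.map (algebraMap k K) p) = p := by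
    apply MvPolynomial.ext
    intro m
    rw [coeff_coeffRetract, coeff_map, hLapp]
  rw [← Ideal.submodule_span_eq, Submodule.mem_span_set] at hp
  obtain ⟨cc, hsupp, hsum⟩ := hp
  have hrw : p = ∑ y ∈ cc.support, coeffRetract L (cc y * y) := by
    rw [← hΦid, ← hsum, Finsupp.sum, map_sum]
    exact Finset.sum_congr rfl fun y _ => by rw [smul_eq_mul]
  rw [hrw]
  refine Ideal.sum_mem _ fun y hy => ?_
  obtain ⟨g, hgT, hgy⟩ := hsupp hy
  rw [← hgy, mul_comm, hΦmul]
  exact Ideal.mul_mem_right _ _ (Ideal.subset_span hgT)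

lemma homogeneousComponent_mul_right {q p : MvPolynomial ι k} {d m : ℕ}
    (hp : p.IsHomogeneous d) (hdm : d ≤ m) :
    homogeneousComponent m (q * p) = homogeneousComponent (m - d) q * p := by
  conv_lhs => rw [← sum_homogeneousComponent q, Finset.sum_mul, map_sum]
  have hterm : ∀ e ∈ Finset.range (q.totalDegree + 1),
      homogeneousComponent m (homogeneousComponent e q * p)
        = if e = m - d then homogeneousComponent e q * p else 0 := by
    intro e _
    rw [homogeneousComponent_of_mem ((mem_homogeneousSubmodule _ _).mpr
      ((homogeneousComponent_isHomogeneous e q).mul hp))]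
    exact if_congr (by omega) rfl rfl
  rw [Finset.sum_congr rfl hterm, Finset.sum_ite_eq' (Finset.range (q.totalDegree + 1)) (m - d)]
  split
  · rfl
  · rename_i hnot
    rw [Finset.mem_range, not_lt] at hnot
    rw [homogeneousComponent_eq_zero (m - d) q (show q.totalDegree < m - d by omega), zero_mul]

lemma homogeneousComponent_mul_right_of_lt {q p : MvPolynomial ι k} {d m : ℕ}
    (hp : p.IsHomogeneous d) (hdm : m < d) :
    homogeneousComponent m (q * p) = 0 := by
  conv_lhs => rw [← sum_homogeneousComponent q, Finset.sum_mul, map_sum]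
  refine Finset.sum_eq_zero fun e _ => ?_
  rw [homogeneousComponent_of_mem ((mem_homogeneousSubmodule _ _).mpr
    ((homogeneousComponent_isHomogeneous e q).mul hp)), if_neg (by omega)]

lemma pow_mem_span_products {A : Subalgebra k (MvPolynomial ι k)}
    (hgraded : IsGradedSubalgebra A) {m : ℕ} (hm : 0 < m) {x : MvPolynomial ι k}
    (hx : x ∈ Ideal.span {g : MvPolynomial ι k | g ∈ A ∧ constantCoeff g = 0})
    (hhom : x.IsHomogeneous m) :
    x ∈ Submodule.span k {y : MvPolynomial ι k |
      ∃ t h, t ∈ A ∧ h.totalDegree < m ∧ y = t * h} := by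
  classical
  rw [← Ideal.submodule_span_eq, Submodule.mem_span_set] at hx
  obtain ⟨cc, hsupp, hsum⟩ := hx
  have h1 : homogeneousComponent m x = x := by
    rw [homogeneousComponent_of_mem ((mem_homogeneousSubmodule _ _).mpr hhom), if_pos rfl]
  have hx' : x = ∑ g ∈ cc.support, homogeneousComponent m (cc g * g) := by
    conv_lhs => rw [← h1, ← hsum]
    rw [Finsupp.sum, map_sum]
    exact Finset.sum_congr rfl fun g _ => by rw [smul_eq_mul]
  rw [hx']
  refine Submodule.sum_mem _ fun g hgmem => ?_
  obtain ⟨hgA, hg0⟩ := hsupp hgmem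
  have hgdec : cc g * g
      = ∑ d ∈ Finset.range (g.totalDegree + 1), cc g * homogeneousComponent d g := by
    rw [← Finset.mul_sum, sum_homogeneousComponent]
  rw [hgdec, map_sum]
  refine Submodule.sum_mem _ fun d _ => ?_
  by_cases hd0 : d = 0
  · subst hd0
    rw [homogeneousComponent_zero, show coeff 0 g = constantCoeff g from rfl, hg0, map_zero,
      mul_zero, map_zero]
    exact Submodule.zero_mem _
  by_cases hdm : d ≤ m
  · rw [homogeneousComponent_mul_right (homogeneousComponent_isHomogeneous d g) hdm]
    refine Submodule.subset_span ?_
    exact ⟨homogeneousComponent d g, homogeneousComponent (m - d) (cc g), hgraded g hgA d,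
      lt_of_le_of_lt (homogeneousComponent_isHomogeneous (m - d) (cc g)).totalDegree_le
        (Nat.sub_lt hm (Nat.pos_of_ne_zero hd0)), mul_comm _ _⟩
  · rw [homogeneousComponent_mul_right_of_lt (homogeneousComponent_isHomogeneous d g)
      (by omega)]
    exact Submodule.zero_mem _

lemma span_monomials_eq_top {A : Subalgebra k (MvPolynomial ι k)} (m : ι → ℕ)
    (hrep : ∀ i, (X i : MvPolynomial ι k) ^ (m i) ∈ Submodule.span k
      {y : MvPolynomial ι k | ∃ t h, t ∈ A ∧ h.totalDegree < m i ∧ y = t * h}) :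
    Submodule.span A ((fun e : ι →₀ ℕ => (monomial e (1 : k) : MvPolynomial ι k)) ''
      {e : ι →₀ ℕ | ∀ i, e i < m i}) = ⊤ := by
  classical
  set S : Set (MvPolynomial ι k) :=
    (fun e : ι →₀ ℕ => (monomial e (1 : k) : MvPolynomial ι k)) ''
      {e : ι →₀ ℕ | ∀ i, e i < m i} with hS
  have key : ∀ n : ℕ, ∀ e : ι →₀ ℕ, ∀ c : k, (e.sum fun _ x => x) < n →
      (monomial e c : MvPolynomial ι k) ∈ Submodule.span A S := by
    intro n
    induction n using Nat.strong_induction_on with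
    | _ n IH =>
    intro e c he
    by_cases hcase : ∀ i, e i < m i
    · have h1 : (monomial e (1 : k) : MvPolynomial ι k) ∈ S := Set.mem_image_of_mem _ hcase
      have h2 : (monomial e c : MvPolynomial ι k)
          = (⟨C c, A.algebraMap_mem c⟩ : A) • (monomial e (1 : k) : MvPolynomial ι k) := by
        rw [Subalgebra.smul_def, smul_eq_mul, C_mul_monomial, mul_one]
      rw [h2]
      exact Submodule.smul_mem _ _ (Submodule.subset_span h1)
    · push_neg at hcase
      obtain ⟨i, hi⟩ := hcase
      have hle : Finsupp.single i (m i) ≤ e := Finsupp.single_le_iff.mpr hi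
      have hee : e - Finsupp.single i (m i) + Finsupp.single i (m i) = e :=
        tsub_add_cancel_of_le hle
      have hdegsum : ((e - Finsupp.single i (m i)).sum fun _ x => x) + m i
          = e.sum fun _ x => x := by
        conv_rhs => rw [← hee]
        rw [Finsupp.sum_add_index' (fun _ => rfl) (fun _ _ _ => rfl),
          Finsupp.sum_single_index rfl]
      have hmon : (monomial e c : MvPolynomial ι k)
          = monomial (e - Finsupp.single i (m i)) c * X i ^ (m i) := by
        rw [X_pow_eq_monomial, monomial_mul, mul_one, hee]
      rw [hmon]
      have hsub : ∀ x ∈ Submodule.span k {y : MvPolynomial ι k |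
          ∃ t h, t ∈ A ∧ h.totalDegree < m i ∧ y = t * h},
          monomial (e - Finsupp.single i (m i)) c * x ∈ Submodule.span A S := by
        intro x hx
        induction hx using Submodule.span_induction with
        | mem y hy =>
          obtain ⟨t, h, htA, hh, rfl⟩ := hy
          have hrw2 : monomial (e - Finsupp.single i (m i)) c * (t * h)
              = (⟨t, htA⟩ : A) • (monomial (e - Finsupp.single i (m i)) c * h) := by
            rw [Subalgebra.smul_def, smul_eq_mul]; ring
          rw [hrw2]
          refine Submodule.smul_mem _ _ ?_
          have hd1 : (monomial (e - Finsupp.single i (m i)) c).totalDegree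
              ≤ (e - Finsupp.single i (m i)).sum fun _ x => x :=
            totalDegree_monomial_le _ _
          have hdeg2 : (monomial (e - Finsupp.single i (m i)) c * h).totalDegree
              < e.sum fun _ x => x := by
            refine lt_of_le_of_lt (totalDegree_mul _ _) ?_
            omega
          rw [as_sum (monomial (e - Finsupp.single i (m i)) c * h)]
          refine Submodule.sum_mem _ fun v hv => ?_
          exact IH (e.sum fun _ x => x) he v _ (lt_of_le_of_lt (le_totalDegree hv) hdeg2)
        | zero =>
          rw [mul_zero]; exact Submodule.zero_mem _
        | add x y hx hy hx' hy' =>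
          rw [mul_add]; exact Submodule.add_mem _ hx' hy'
        | smul a x hx hx' =>
          rw [mul_smul_comm, ← algebraMap_smul (A := ↥A) a
            (monomial (e - Finsupp.single i (m i)) c * x)]
          exact Submodule.smul_mem _ _ hx'
      exact hsub _ (hrep i)
  rw [eq_top_iff]
  intro f _
  rw [as_sum f]
  refine Submodule.sum_mem _ fun v _ => ?_
  exact key ((v.sum fun _ x => x) + 1) v _ (Nat.lt_succ_self _)

end Aux

/-- If `A ⊆ k[V]^G` is a graded geometric separating algebra for a
finite group `G`, then the extension `A ⊆ k[V]^G` is integral and `A` is a finitely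
generated `k`-algebra. -/
theorem separating_algebra_integral_and_finitelyGenerated
    {k : Type*} [Field k] {G : Type*} [Group G] [Finite G]
    {ι : Type*} [Fintype ι] [DecidableEq ι]
    (ρ : Representation k G (ι → k)) (A : Subalgebra k (MvPolynomial ι k))
    (hgraded : IsGradedSubalgebra A) (hsep : IsGeomSeparatingAlgebra ρ A) :
    (∀ f ∈ invariantRing ρ, (algebraMap A (MvPolynomial ι k)).IsIntegralElem f) ∧ A.FG := by
  classical
  set K := AlgebraicClosure k with hK
  set S₀ : Set (MvPolynomial ι k) := {g : MvPolynomial ι k | g ∈ A ∧ constantCoeff g = 0}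
    with hS₀
  have hpow : ∀ i : ι, ∃ mm : ℕ, 0 < mm ∧ (X i : MvPolynomial ι k) ^ mm ∈ Ideal.span S₀ := by
    intro i
    have hrad : (X i : MvPolynomial ι K) ∈
        (Ideal.span (MvPolynomial.map (algebraMap k K) '' S₀)).radical := by
      rw [← MvPolynomial.vanishingIdeal_zeroLocus_eq_radical (K := K), mem_vanishingIdeal_iff]
      intro u hu
      have hu0 : u = 0 := by
        refine nullcone_trivial ρ A hsep u ?_
        intro g hgA hg0
        have hgJ : MvPolynomial.map (algebraMap k K) g ∈
            Ideal.span (MvPolynomial.map (algebraMap k K) '' S₀) :=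
          Ideal.subset_span ⟨g, ⟨hgA, hg0⟩, rfl⟩
        have h5 := hu _ hgJ
        rwa [MvPolynomial.aeval_map_algebraMap] at h5
      rw [hu0, aeval_X, Pi.zero_apply]
    rw [Ideal.mem_radical_iff] at hrad
    obtain ⟨mm, hmm⟩ := hrad
    refine ⟨mm + 1, Nat.succ_pos mm, ?_⟩
    refine retract_mem_span (K := K) _ _ ?_
    rw [map_pow, MvPolynomial.map_X, pow_succ]
    exact Ideal.mul_mem_right _ _ hmm
  choose m hm1 hm2 using hpow
  have hreps : ∀ i, (X i : MvPolynomial ι k) ^ (m i) ∈ Submodule.span k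
      {y : MvPolynomial ι k | ∃ t h, t ∈ A ∧ h.totalDegree < m i ∧ y = t * h} := by
    intro i
    refine pow_mem_span_products hgraded (hm1 i) (hm2 i) ?_
    simpa using (isHomogeneous_X k i).pow (m i)
  have hspan := span_monomials_eq_top (A := A) m hreps
  have hfin : Module.Finite A (MvPolynomial ι k) := by
    rw [Module.finite_def, Submodule.fg_def]
    refine ⟨_, ?_, hspan⟩
    refine Set.Finite.image _ ?_
    have hsubset : {e : ι →₀ ℕ | ∀ i, e i < m i}
        ⊆ Set.Iic (Finsupp.equivFunOnFinite.symm fun i => m i - 1) := by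
      intro e he
      rw [Set.mem_Iic, Finsupp.le_def]
      intro i
      have h1 := he i
      have h2 := hm1 i
      have hb : (Finsupp.equivFunOnFinite.symm fun i => m i - 1) i = m i - 1 := rfl
      omega
    have hfinIic : (Set.Iic (Finsupp.equivFunOnFinite.symm fun i => m i - 1)).Finite := by
      rw [← Set.Icc_bot]
      exact Set.finite_Icc _ _
    exact hfinIic.subset hsubset
  haveI := hfin
  constructor
  · intro f _
    exact IsIntegral.of_finite A f
  · rw [← Subalgebra.fg_top]
    refine fg_of_fg_of_fg (A := k) (B := ↥A) (C := MvPolynomial ι k) ?_ ?_ ?_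
    · exact (inferInstance : Algebra.FiniteType k (MvPolynomial ι k)).out
    · exact Module.finite_def.mp hfin
    · exact fun a b hab => Subtype.ext hab
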